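/- Let q be an odd prime and k ≥ 2. Then for no n does there exist a k-dimensional ZMod q-subspace C of (Fin n → ZMod q) satisfying both |w_L(C)| = (q^k − 1)/2 (Lee-MWS) and w_L(C) = {1, 2, …, n·(q−1)/2} (Lee-FWS). -/

import Mathlib

/-- The Lee weight of an element of `ZMod q`. -/
def leeWt {q : ℕ} (α : ZMod q) : ℕ := min α.val (q - α.val)

/-- The Lee weight of a vector. -/
def leeW {q n : ℕ} (c : Fin n → ZMod q) : ℕ := ∑ i, leeWt (c i)

/-- The Lee weight set of a set of vectors. -/
def leeSet {q n : ℕ} (C : Set (Fin n → ZMod q)) : Set ℕ :=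
  {x | ∃ c ∈ C, c ≠ 0 ∧ leeW c = x}

lemma leeWt_zero {q : ℕ} [NeZero q] : leeWt (0 : ZMod q) = 0 := by
  simp [leeWt]

lemma leeWt_neg {q : ℕ} [NeZero q] (α : ZMod q) : leeWt (-α) = leeWt α := by
  by_cases h : α = 0
  · simp [h]
  · have hv : α.val < q := ZMod.val_lt α
    have h0 : α.val ≠ 0 := fun hh => h ((ZMod.val_eq_zero α).mp hh)
    simp only [leeWt, ZMod.neg_val, if_neg h]
    omega

lemma leeW_neg {q n : ℕ} [NeZero q] (c : Fin n → ZMod q) : leeW (-c) = leeW c := by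
  unfold leeW
  exact Finset.sum_congr rfl fun i _ => by simpa using leeWt_neg (c i)

lemma leeWt_le {q m : ℕ} [NeZero q] (hm : q = 2*m+1) (α : ZMod q) : leeWt α ≤ m := by
  have hv : α.val < q := ZMod.val_lt α
  unfold leeWt
  omega

lemma sum_leeWt {q m : ℕ} [NeZero q] (hm : q = 2*m+1) :
    ∑ α : ZMod q, leeWt α = m*(m+1) := by
  have h1 : ∑ α : ZMod q, leeWt α = ∑ a ∈ Finset.range q, min a (q - a) := by
    refine Finset.sum_nbij' (fun α => ZMod.val α) (fun a => (a : ZMod q)) ?_ ?_ ?_ ?_ ?_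
    · intro α _; exact Finset.mem_range.mpr (ZMod.val_lt α)
    · intro a _; exact Finset.mem_univ _
    · intro α _; exact ZMod.natCast_rightInverse α
    · intro a ha; exact ZMod.val_cast_of_lt (Finset.mem_range.mp ha)
    · intro α _; rfl
  rw [h1]
  have h2 : Finset.range q = Finset.range (m+1) ∪ Finset.Ico (m+1) q := by
    rw [Finset.range_eq_Ico, Finset.range_eq_Ico]
    exact (Finset.Ico_union_Ico_eq_Ico (Nat.zero_le _) (by omega : m+1 ≤ q)).symm
  rw [h2, Finset.sum_union (by
    rw [Finset.range_eq_Ico]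
    exact Finset.Ico_disjoint_Ico_consecutive 0 (m+1) q)]
  have h3 : ∑ a ∈ Finset.range (m+1), min a (q - a) = ∑ a ∈ Finset.range (m+1), a :=
    Finset.sum_congr rfl fun a ha => by
      have := Finset.mem_range.mp ha; omega
  have h4 : ∑ a ∈ Finset.Ico (m+1) q, min a (q - a)
      = ∑ a ∈ Finset.Ico (m+1) q, (q - a) :=
    Finset.sum_congr rfl fun a ha => by
      have := Finset.mem_Ico.mp ha; omega
  rw [h3, h4, Finset.sum_Ico_eq_sum_range]
  have h5 : ∑ j ∈ Finset.range (q - (m+1)), (q - (m+1+j)) = ∑ j ∈ Finset.range m, (m - j) := by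
    have : q - (m+1) = m := by omega
    rw [this]
    exact Finset.sum_congr rfl fun j hj => by
      have := Finset.mem_range.mp hj; omega
  rw [h5]
  have h6 : ∑ j ∈ Finset.range m, (m - j) = ∑ j ∈ Finset.range m, (j+1) := by
    rw [← Finset.sum_range_reflect]
    exact Finset.sum_congr rfl fun j hj => by
      have := Finset.mem_range.mp hj; omega
  have h7 : ∑ j ∈ Finset.range m, (j+1) = ∑ a ∈ Finset.range (m+1), a := by
    rw [Finset.sum_range_succ' (fun a => a) m]
    simp
  have h8 := Finset.sum_range_id_mul_two (m+1)
  simp only [Nat.add_sub_cancel] at h8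
  rw [h6, h7]
  linarith

lemma pow_split (q k : ℕ) (hk : 1 ≤ k) : q ^ k = q * q ^ (k-1) := by
  obtain ⟨k', rfl⟩ : ∃ k', k = k' + 1 := ⟨k-1, by omega⟩
  rw [pow_succ']
  simp

lemma twice_sum_Icc (N : ℕ) : 2 * ∑ w ∈ Finset.Icc 1 N, w = N * (N+1) := by
  induction N with
  | zero => simp
  | succ N ih =>
    rw [Finset.sum_Icc_succ_top (by omega)]
    ring_nf
    ring_nf at ih
    omega

theorem stmt15 (q k : ℕ) (hq : q.Prime) (hodd : Odd q) (hk : 2 ≤ k) :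
    ¬ ∃ (n : ℕ) (C : Submodule (ZMod q) (Fin n → ZMod q)),
        Module.finrank (ZMod q) C = k ∧
        (leeSet (C : Set (Fin n → ZMod q))).ncard = (q ^ k - 1) / 2 ∧
        leeSet (C : Set (Fin n → ZMod q)) = Set.Icc 1 (n * ((q - 1) / 2)) := by
  classical
  rintro ⟨n, C, hrank, hMWS, hFWS⟩
  haveI : Fact q.Prime := ⟨hq⟩
  haveI : NeZero q := ⟨hq.ne_zero⟩
  obtain ⟨m, hm⟩ := id hodd
  have hm' : q = 2*m+1 := by omega
  have hq3 : 3 ≤ q := by have := hq.two_le; omega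
  have hm1 : 1 ≤ m := by omega
  set N := n * m with hNdef
  have hFWS' : leeSet (C : Set (Fin n → ZMod q)) = Set.Icc 1 N := by
    have h2 : (q-1)/2 = m := by omega
    rw [hFWS, h2]
  -- the finset of codewords
  haveI : Fintype ↥(C : Set (Fin n → ZMod q)) := Fintype.ofFinite _
  set F : Finset (Fin n → ZMod q) := (C : Set (Fin n → ZMod q)).toFinset with hFdef
  have hmemF : ∀ c, c ∈ F ↔ c ∈ C := by
    intro c; rw [hFdef, Set.mem_toFinset]; rfl
  have hFcard : F.card = q ^ k := by
    rw [hFdef, Set.toFinset_card]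
    have : Fintype.card ↥(C : Set (Fin n → ZMod q)) = Fintype.card ↥C :=
      Fintype.card_congr (Equiv.refl _)
    rw [this, Module.card_eq_pow_finrank (K := ZMod q) (V := ↥C), ZMod.card, hrank]
  set T : Finset (Fin n → ZMod q) := F.filter (· ≠ 0) with hTdef
  have hmemT : ∀ c, c ∈ T ↔ (c ∈ C ∧ c ≠ 0) := by
    intro c; rw [hTdef, Finset.mem_filter, hmemF]
  have hTcard : T.card = q ^ k - 1 := by
    rw [hTdef, Finset.filter_ne', Finset.card_erase_of_mem ((hmemF 0).mpr C.zero_mem), hFcard]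
  -- the weight image
  have himg : (↑(T.image leeW) : Set ℕ) = leeSet (C : Set (Fin n → ZMod q)) := by
    ext x
    simp only [Finset.coe_image, Set.mem_image, Finset.mem_coe, leeSet, Set.mem_setOf_eq]
    constructor
    · rintro ⟨c, hc, rfl⟩
      obtain ⟨h1, h2⟩ := (hmemT c).mp hc
      exact ⟨c, h1, h2, rfl⟩
    · rintro ⟨c, h1, h2, rfl⟩
      exact ⟨c, (hmemT c).mpr ⟨h1, h2⟩, rfl⟩
  have hIcc : T.image leeW = Finset.Icc 1 N := by
    apply Finset.coe_injective
    rw [himg, hFWS', Finset.coe_Icc]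
  -- q^k is odd
  obtain ⟨t, ht⟩ : Odd (q ^ k) := hodd.pow
  have hNt : N = t := by
    have h1 : (T.image leeW).card = (q ^ k - 1) / 2 := by
      rw [← Set.ncard_coe_finset, himg, hMWS]
    rw [hIcc, Nat.card_Icc] at h1
    omega
  have ht1 : 1 ≤ t := by
    have : 1 < q ^ k := Nat.one_lt_pow (by omega) (by omega)
    omega
  have hN1 : 1 ≤ N := by omega
  have hn1 : 1 ≤ n := by
    rcases Nat.eq_zero_or_pos n with h | h
    · rw [h] at hNdef; omega
    · exact h
  have hmapsto : ∀ c ∈ T, leeW c ∈ Finset.Icc 1 N := fun c hc =>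
    hIcc ▸ Finset.mem_image_of_mem leeW hc
  have htwo : (2 : ZMod q) ≠ 0 := by
    have h2 : ((2:ℕ) : ZMod q) ≠ 0 := by
      rw [Ne, ZMod.natCast_eq_zero_iff]
      intro hdvd
      exact absurd (Nat.le_of_dvd (by norm_num) hdvd) (by omega)
    simpa using h2
  have hfib2 : ∀ w ∈ Finset.Icc 1 N, 2 ≤ (T.filter (fun c => leeW c = w)).card := by
    intro w hw
    rw [← hIcc] at hw
    obtain ⟨c, hc, hcw⟩ := Finset.mem_image.mp hw
    obtain ⟨hcC, hc0⟩ := (hmemT c).mp hc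
    have hnegT : -c ∈ T := (hmemT _).mpr ⟨C.neg_mem hcC, by simpa using hc0⟩
    have hne : c ≠ -c := by
      intro h
      have h2 : (2 : ZMod q) • c = 0 := by
        rw [two_smul]; nth_rewrite 2 [h]; simp
      rcases smul_eq_zero.mp h2 with h3 | h3
      · exact htwo h3
      · exact hc0 h3
    apply Finset.one_lt_card.mpr
    exact ⟨c, Finset.mem_filter.mpr ⟨hc, hcw⟩, -c,
      Finset.mem_filter.mpr ⟨hnegT, by rw [leeW_neg, hcw]⟩, hne⟩
  have hsumfib : ∑ w ∈ Finset.Icc 1 N, (T.filter (fun c => leeW c = w)).card = q ^ k - 1 := by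
    rw [← Finset.card_eq_sum_card_fiberwise hmapsto, hTcard]
  have hfibeq : ∀ w ∈ Finset.Icc 1 N, (T.filter (fun c => leeW c = w)).card = 2 := by
    have hconst : ∑ _w ∈ Finset.Icc 1 N, 2 = q ^ k - 1 := by
      rw [Finset.sum_const, Nat.card_Icc, smul_eq_mul]; omega
    intro w hw
    exact ((Finset.sum_eq_sum_iff_of_le hfib2).mp (by rw [hsumfib, hconst]) w hw).symm
  have hS1 : ∑ c ∈ T, leeW c = N * (N + 1) := by
    rw [← Finset.sum_fiberwise_of_maps_to hmapsto leeW]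
    have h1 : ∀ w ∈ Finset.Icc 1 N,
        (∑ c ∈ T.filter (fun c => leeW c = w), leeW c) = 2 * w := by
      intro w hw
      rw [Finset.sum_congr rfl (fun c hc => (Finset.mem_filter.mp hc).2),
        Finset.sum_const, hfibeq w hw, smul_eq_mul]
    rw [Finset.sum_congr rfl h1, ← Finset.mul_sum, twice_sum_Icc]
  -- a max-weight codeword has all coordinates nonzero
  have hNin : N ∈ T.image leeW := by
    rw [hIcc]; exact Finset.mem_Icc.mpr ⟨hN1, le_refl N⟩
  obtain ⟨ch, hchT, hchw⟩ := Finset.mem_image.mp hNin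
  have hch0 : ∀ i, ch i ≠ 0 := by
    intro i hi0
    have hlt : ∑ j, leeWt (ch j) < ∑ _j : Fin n, m := by
      apply Finset.sum_lt_sum (fun j _ => leeWt_le hm' (ch j))
      exact ⟨i, Finset.mem_univ i, by rw [hi0, leeWt_zero]; omega⟩
    rw [Finset.sum_const, Finset.card_univ, Fintype.card_fin, smul_eq_mul] at hlt
    have heq : leeW ch = ∑ j, leeWt (ch j) := rfl
    rw [heq] at hchw
    omega
  obtain ⟨hchC, _⟩ := (hmemT ch).mp hchT
  -- all coordinate fibers have the same cardinality
  have hfibcoord : ∀ (i : Fin n) (α : ZMod q),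
      (F.filter (fun c => c i = α)).card = (F.filter (fun c => c i = 0)).card := by
    intro i α
    set d : Fin n → ZMod q := (α * (ch i)⁻¹) • ch with hd
    have hdC : d ∈ C := C.smul_mem _ hchC
    have hdi : d i = α := by
      rw [hd]
      simp only [Pi.smul_apply, smul_eq_mul]
      rw [mul_assoc, inv_mul_cancel₀ (hch0 i), mul_one]
    symm
    apply Finset.card_bij' (fun c _ => c + d) (fun c _ => c - d)
    · intro c hc
      obtain ⟨hcF, hci⟩ := Finset.mem_filter.mp hc
      refine Finset.mem_filter.mpr ⟨(hmemF _).mpr (C.add_mem ((hmemF _).mp hcF) hdC), ?_⟩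
      simp [Pi.add_apply, hci, hdi]
    · intro c hc
      obtain ⟨hcF, hci⟩ := Finset.mem_filter.mp hc
      refine Finset.mem_filter.mpr ⟨(hmemF _).mpr (C.sub_mem ((hmemF _).mp hcF) hdC), ?_⟩
      simp [Pi.sub_apply, hci, hdi]
    · intro c _; simp
    · intro c _; simp
  have hfibval : ∀ (i : Fin n) (α : ZMod q),
      (F.filter (fun c => c i = α)).card = q ^ (k-1) := by
    intro i α
    have hsum : ∑ β : ZMod q, (F.filter (fun c => c i = β)).card = q ^ k := by
      rw [← Finset.card_eq_sum_card_fiberwise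
        (fun c _ => Finset.mem_univ (c i)) (t := Finset.univ), hFcard]
    rw [Finset.sum_congr rfl (fun β _ => hfibcoord i β), Finset.sum_const,
      Finset.card_univ, ZMod.card, smul_eq_mul] at hsum
    have hpow : q ^ k = q * q ^ (k-1) := pow_split q k (by clear hsum; omega)
    rw [hfibcoord i α]
    exact Nat.eq_of_mul_eq_mul_left (by clear hsum hpow; omega) (hsum.trans hpow)
  -- the coordinate-wise computation of the total weight
  have hS2 : ∑ c ∈ T, leeW c = n * (q ^ (k-1) * (m * (m+1))) := by
    have h0 : ∑ c ∈ T, leeW c = ∑ c ∈ F, leeW c := by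
      rw [hTdef, Finset.filter_ne']
      exact Finset.sum_erase F (by simp [leeW, leeWt_zero])
    have h1 : ∑ c ∈ F, leeW c = ∑ i : Fin n, ∑ c ∈ F, leeWt (c i) := by
      rw [show (∑ c ∈ F, leeW c) = ∑ c ∈ F, ∑ i : Fin n, leeWt (c i) from rfl]
      exact Finset.sum_comm
    have h2 : ∀ i : Fin n, ∑ c ∈ F, leeWt (c i) = q ^ (k-1) * (m * (m+1)) := by
      intro i
      rw [← Finset.sum_fiberwise_of_maps_to (s := F)
        (t := (Finset.univ : Finset (ZMod q))) (g := fun c => c i)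
        (fun c _ => Finset.mem_univ (c i)) (fun c => leeWt (c i))]
      have h3 : ∀ β : ZMod q, (∑ c ∈ F.filter (fun c => c i = β), leeWt (c i))
          = q ^ (k-1) * leeWt β := by
        intro β
        rw [Finset.sum_congr rfl
          (fun c hc => by rw [(Finset.mem_filter.mp hc).2]),
          Finset.sum_const, hfibval i β, smul_eq_mul]
      rw [Finset.sum_congr rfl (fun β _ => h3 β), ← Finset.mul_sum, sum_leeWt hm']
    rw [h0, h1, Finset.sum_congr rfl (fun i _ => h2 i), Finset.sum_const,
      Finset.card_univ, Fintype.card_fin, smul_eq_mul]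
  -- put everything together
  have key : (n*m) * (q^(k-1) * (m+1)) = (n*m) * (n*m+1) := by
    calc (n*m) * (q^(k-1)*(m+1)) = n * (q^(k-1) * (m*(m+1))) := by ring
    _ = N * (N + 1) := by rw [← hS2, hS1]
    _ = (n*m) * (n*m+1) := by rw [hNdef]
  have hcancel : q^(k-1) * (m+1) = n*m + 1 :=
    Nat.eq_of_mul_eq_mul_left (by omega) key
  have hP3 : 3 ≤ q^(k-1) := le_trans hq3 (Nat.le_self_pow (by omega) q)
  have hpow : q ^ k = q * q ^ (k-1) := pow_split q k (by omega)
  have e1 : q^(k-1) * (m+1) = m * q^(k-1) + q^(k-1) := by ring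
  have e2 : q * q^(k-1) = 2*(m * q^(k-1)) + q^(k-1) := by rw [hm']; ring
  omega
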